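/- Let b > 0 and for s ∈ (−b, b) set K_tan(s) = b⁴/( b⁴ + (1 − b²)s² ) and K_rad(s) = b⁶/( b⁴ + (1 − b²)s² )². Then b⁴ + (1−b²)s² > 0 and K_tan(s), K_rad(s) > 0 for all s ∈ (−b, b); if b ≥ 1 then 1/b² ≤ K_rad(s)/K_tan(s) ≤ 1 for all s ∈ (−b, b); if 0 < b ≤ 1 then 1 ≤ K_rad(s)/K_tan(s) ≤ 1/b² for all s ∈ (−b, b); and the inequality K_rad(s) ≤ (2 + √5)·K_tan(s) holds for all s ∈ (−b, b) if and only if b² ≥ 1/(2 + √5). -/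

import Mathlib

/-- Curvature estimates for the generalized ellipsoid: with
`K_tan(s) = b⁴/(b⁴+(1−b²)s²)` and `K_rad(s) = b⁶/(b⁴+(1−b²)s²)²` on `(−b,b)`,
the denominator and both curvatures are positive; if `b ≥ 1` then
`1/b² ≤ K_rad/K_tan ≤ 1`; if `b ≤ 1` then `1 ≤ K_rad/K_tan ≤ 1/b²`; and
`K_rad ≤ (2+√5)K_tan` holds on all of `(−b,b)` iff `b² ≥ 1/(2+√5)`. -/
theorem stmt_18 (b : ℝ) (hb : 0 < b)
    (Ktan Krad : ℝ → ℝ)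
    (hKtan : ∀ s, Ktan s = b ^ 4 / (b ^ 4 + (1 - b ^ 2) * s ^ 2))
    (hKrad : ∀ s, Krad s = b ^ 6 / (b ^ 4 + (1 - b ^ 2) * s ^ 2) ^ 2) :
    (∀ s ∈ Set.Ioo (-b) b,
      0 < b ^ 4 + (1 - b ^ 2) * s ^ 2 ∧ 0 < Ktan s ∧ 0 < Krad s) ∧
    (1 ≤ b → ∀ s ∈ Set.Ioo (-b) b,
      1 / b ^ 2 ≤ Krad s / Ktan s ∧ Krad s / Ktan s ≤ 1) ∧
    (b ≤ 1 → ∀ s ∈ Set.Ioo (-b) b,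
      1 ≤ Krad s / Ktan s ∧ Krad s / Ktan s ≤ 1 / b ^ 2) ∧
    ((∀ s ∈ Set.Ioo (-b) b, Krad s ≤ (2 + Real.sqrt 5) * Ktan s) ↔
      1 / (2 + Real.sqrt 5) ≤ b ^ 2) := by
  have hs5 : (2:ℝ) < Real.sqrt 5 := by
    have : Real.sqrt 4 < Real.sqrt 5 := Real.sqrt_lt_sqrt (by norm_num) (by norm_num)
    have h4 : Real.sqrt 4 = 2 := by
      rw [show (4:ℝ) = 2^2 by norm_num, Real.sqrt_sq (by norm_num)]
    linarith
  have hc : (0:ℝ) < 2 + Real.sqrt 5 := by linarith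
  have hb2 : 0 < b ^ 2 := by positivity
  have hs2 : ∀ s ∈ Set.Ioo (-b) b, s ^ 2 < b ^ 2 := by
    intro s hs
    exact sq_lt_sq' hs.1 hs.2
  have hD : ∀ s ∈ Set.Ioo (-b) b, 0 < b ^ 4 + (1 - b ^ 2) * s ^ 2 := by
    intro s hs
    have h1 := hs2 s hs
    have h2 : 0 ≤ s ^ 2 := sq_nonneg s
    nlinarith
  have hratio : ∀ s ∈ Set.Ioo (-b) b,
      Krad s / Ktan s = b ^ 2 / (b ^ 4 + (1 - b ^ 2) * s ^ 2) := by
    intro s hs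
    have hDs := hD s hs
    rw [hKrad, hKtan]
    field_simp
  refine ⟨?_, ?_, ?_, ?_⟩
  · intro s hs
    have hDs := hD s hs
    refine ⟨hDs, ?_, ?_⟩
    · rw [hKtan]; positivity
    · rw [hKrad]; positivity
  · intro hb1 s hs
    have hDs := hD s hs
    have h1 := hs2 s hs
    rw [hratio s hs]
    constructor
    · rw [div_le_div_iff₀ hb2 hDs]
      nlinarith [mul_nonneg (by nlinarith : (0:ℝ) ≤ b ^ 2 - 1) (sq_nonneg s)]
    · rw [div_le_one hDs]
      nlinarith [mul_nonneg (by nlinarith : (0:ℝ) ≤ b ^ 2 - 1)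
        (by nlinarith : (0:ℝ) ≤ b ^ 2 - s ^ 2)]
  · intro hb1 s hs
    have hDs := hD s hs
    have h1 := hs2 s hs
    have h2 : 0 ≤ s ^ 2 := sq_nonneg s
    rw [hratio s hs]
    constructor
    · rw [le_div_iff₀ hDs]
      nlinarith [mul_nonneg (by nlinarith : (0:ℝ) ≤ 1 - b ^ 2)
        (by nlinarith : (0:ℝ) ≤ b ^ 2 - s ^ 2)]
    · rw [div_le_div_iff₀ hDs hb2]
      nlinarith [mul_nonneg (by nlinarith : (0:ℝ) ≤ 1 - b ^ 2) (sq_nonneg s)]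
  · constructor
    · intro h
      have h0 : (0:ℝ) ∈ Set.Ioo (-b) b := ⟨by linarith, hb⟩
      have key := h 0 h0
      rw [hKrad, hKtan] at key
      have hb4 : (0:ℝ) < b ^ 4 := by positivity
      have e1 : b ^ 6 / (b ^ 4 + (1 - b ^ 2) * 0 ^ 2) ^ 2 = 1 / b ^ 2 := by
        rw [show b ^ 4 + (1 - b ^ 2) * 0 ^ 2 = b ^ 4 by ring]
        field_simp
      have e2 : b ^ 4 / (b ^ 4 + (1 - b ^ 2) * 0 ^ 2) = 1 := by
        rw [show b ^ 4 + (1 - b ^ 2) * 0 ^ 2 = b ^ 4 by ring]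
        exact div_self (ne_of_gt hb4)
      rw [e1, e2, mul_one, div_le_iff₀ hb2] at key
      rw [div_le_iff₀ hc]
      nlinarith [key]
    · intro h s hs
      have hDs := hD s hs
      have h1 := hs2 s hs
      have h2 : 0 ≤ s ^ 2 := sq_nonneg s
      have hkey : b ^ 2 ≤ (2 + Real.sqrt 5) * (b ^ 4 + (1 - b ^ 2) * s ^ 2) := by
        rw [div_le_iff₀ hc] at h
        rcases le_total (b ^ 2) 1 with hb1 | hb1
        · nlinarith
        · nlinarith
      rw [hKrad, hKtan, div_le_iff₀ (by positivity)]
      have e3 : (b ^ 4 + (1 - b ^ 2) * s ^ 2) ^ 2 *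
          ((2 + Real.sqrt 5) * (b ^ 4 / (b ^ 4 + (1 - b ^ 2) * s ^ 2)))
          = (2 + Real.sqrt 5) * (b ^ 4 + (1 - b ^ 2) * s ^ 2) * b ^ 4 := by
        field_simp
      rw [mul_comm ((2 + Real.sqrt 5) * (b ^ 4 / (b ^ 4 + (1 - b ^ 2) * s ^ 2)))]
      rw [e3]
      nlinarith [hkey, pow_pos hb 4]
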